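/- Let G be a finite group, let S and T be G-sets, and suppose there exists a G-equivariant map ε : T → S. If f : ℤ[S]₀ → ℤ[T] is an additive map such that Σ_{g∈G} g•f = 0 in Hom(ℤ[S]₀,ℤ[T]), then f lies in the additive subgroup of Hom(ℤ[S]₀,ℤ[T]) generated by the elements g•h − h with g ∈ G and h ∈ Hom(ℤ[S]₀,ℤ[T]). Equivalently, Ĥ^{-1}(G, Hom(ℤ[S]₀, ℤ[T])) = 0. -/

import Mathlib

set_option linter.unusedSectionVars false
set_option maxHeartbeats 1000000

/-- The augmentation map `ℤ[S] → ℤ`, `∑ n_s · s ↦ ∑ n_s`. -/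
noncomputable def aug (S : Type*) : (S →₀ ℤ) →+ ℤ :=
  Finsupp.liftAddHom fun _ => AddMonoidHom.id ℤ

/-- The action of `g : G` on `ℤ[S]`, permuting the basis elements. -/
noncomputable def permHom {G : Type*} [Group G] {S : Type*} [MulAction G S]
    (g : G) : (S →₀ ℤ) →+ (S →₀ ℤ) :=
  Finsupp.mapDomain.addMonoidHom (fun s => g • s)

lemma aug_permHom {G : Type*} [Group G] {S : Type*} [MulAction G S] (g : G) (x : S →₀ ℤ) :
    aug S (permHom g x) = aug S x := by
  have h : (aug S).comp (permHom (G := G) (S := S) g) = aug S := by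
    apply Finsupp.addHom_ext
    intro s n
    simp [aug, permHom, Finsupp.mapDomain.addMonoidHom, Finsupp.mapDomain_single]
  exact DFunLike.congr_fun h x

/-- The action of `g : G` on `ℤ[S]₀ = ker(aug)`. -/
noncomputable def permHom0 {G : Type*} [Group G] {S : Type*} [MulAction G S]
    (g : G) : ↥(aug S).ker →+ ↥(aug S).ker :=
  AddMonoidHom.codRestrict ((permHom g).comp (aug S).ker.subtype) (aug S).ker
    (fun x => by
      have hx : aug S (x : S →₀ ℤ) = 0 := AddMonoidHom.mem_ker.mp x.2
      simpa [AddMonoidHom.mem_ker, aug_permHom] using hx)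

/-- The action of `g : G` on `Hom(ℤ[S]₀, ℤ[T])`: `(g • f)(m) = g • f (g⁻¹ • m)`. -/
noncomputable def homAct0 {G S T : Type*} [Group G] [MulAction G S] [MulAction G T]
    (g : G) (f : ↥(aug S).ker →+ (T →₀ ℤ)) : ↥(aug S).ker →+ (T →₀ ℤ) :=
  (permHom g).comp (f.comp (permHom0 g⁻¹))

section Aux

variable {G S T : Type*} [Group G] [Fintype G] [MulAction G S] [MulAction G T]

lemma aug_single (s : S) (n : ℤ) : aug S (Finsupp.single s n) = n := by
  simp [aug]

lemma permHom_def (g : G) (y : S →₀ ℤ) :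
    permHom g y = Finsupp.mapDomain (fun s => g • s) y := rfl

lemma permHom_single (g : G) (s : S) (n : ℤ) :
    permHom g (Finsupp.single s n) = Finsupp.single (g • s) n := by
  rw [permHom_def, Finsupp.mapDomain_single]

lemma permHom_apply (g : G) (y : S →₀ ℤ) (t : S) :
    permHom g y t = y (g⁻¹ • t) := by
  conv_lhs => rw [show t = g • (g⁻¹ • t) by rw [smul_inv_smul]]
  rw [permHom_def]
  exact Finsupp.mapDomain_apply (MulAction.injective g) y _

lemma permHom_mul (g h : G) (y : S →₀ ℤ) :
    permHom g (permHom h y) = permHom (g * h) y := by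
  rw [permHom_def, permHom_def, permHom_def, ← Finsupp.mapDomain_comp]
  congr 1
  funext s
  simp [mul_smul]

end Aux

section Orbit

variable {G X : Type*} [Group G] [Fintype G] [MulAction G X]

lemma orbit_data :
    ∃ (R : X → X) (γ : X → G),
      (∀ (g : G) (p : X), R (g • p) = R p) ∧ (∀ p, R (R p) = R p) ∧
      (∀ p, γ p • R p = p) := by
  classical
  set q : X → Quotient (MulAction.orbitRel G X) := fun p => Quotient.mk _ p with hq
  set R : X → X := fun p => (q p).out with hR
  have hqR : ∀ p, q (R p) = q p := fun p => Quotient.out_eq _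
  have hrel : ∀ p, ∃ g : G, g • R p = p := by
    intro p
    have h : R p ∈ MulAction.orbit G p := Quotient.exact (hqR p)
    obtain ⟨g, hg⟩ := MulAction.mem_orbit_iff.mp h
    exact ⟨g⁻¹, by rw [← hg, inv_smul_smul]⟩
  refine ⟨R, fun p => Classical.choose (hrel p), ?_, ?_, fun p => Classical.choose_spec (hrel p)⟩
  · intro g p
    have : q (g • p) = q p := Quotient.sound (MulAction.mem_orbit _ _)
    simp only [hR, this]
  · intro p
    simp only [hR, hqR]
    exact congrArg Quotient.out (hqR p)

open Classical in
lemma count_aux (R : X → X) (γ : X → G)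
    (hRs : ∀ (g : G) (p : X), R (g • p) = R p)
    (hγ : ∀ p, γ p • R p = p)
    (c : X → ℤ) (p₀ : X) (hrep : R p₀ = p₀)
    (h0 : ∑ g : G, c (g • p₀) = 0) :
    ∑ g : G, (if γ (g • p₀) = g then c (g • p₀) else 0) = 0 := by
  classical
  set u : G → G := fun g => γ (g • p₀) with hu
  have hus : ∀ g : G, u g • p₀ = g • p₀ := by
    intro g
    have h := hγ (g • p₀)
    rwa [hRs, hrep] at h
  set n : ℕ := (Finset.univ.filter fun h : G => h • p₀ = p₀).card with hn
  have key : ∀ g₀ : G, (Finset.univ.filter fun g : G => u g = g₀).card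
      = if u g₀ = g₀ then n else 0 := by
    intro g₀
    by_cases h : u g₀ = g₀
    · rw [if_pos h]
      have hset : (Finset.univ.filter fun g : G => u g = g₀)
          = Finset.univ.filter fun g : G => g • p₀ = g₀ • p₀ := by
        ext g
        simp only [Finset.mem_filter, Finset.mem_univ, true_and]
        constructor
        · intro hg; rw [← hus g, hg]
        · intro hg
          have huu : u g₀ = u g := by
            show γ (g₀ • p₀) = γ (g • p₀)
            rw [hg]
          rw [← huu, h]
      rw [hset, hn]
      apply Finset.card_bij' (fun g _ => g₀⁻¹ * g) (fun h _ => g₀ * h)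
      · intro g hg
        simp only [Finset.mem_filter, Finset.mem_univ, true_and] at hg ⊢
        rw [mul_smul, hg, inv_smul_smul]
      · intro g hg
        simp only [Finset.mem_filter, Finset.mem_univ, true_and] at hg ⊢
        rw [mul_smul, hg]
      · intro g _; rw [mul_inv_cancel_left]
      · intro g _; rw [inv_mul_cancel_left]
    · rw [if_neg h]
      rw [Finset.card_eq_zero, Finset.filter_eq_empty_iff]
      intro g _ hg
      apply h
      have huu : u g₀ = u g := by
        show γ (g₀ • p₀) = u g
        rw [← hg, hus]
      rw [huu, hg]
  have step : ∑ g : G, c (g • p₀)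
      = n • ∑ g₀ : G, (if u g₀ = g₀ then c (g₀ • p₀) else 0) := by
    calc ∑ g : G, c (g • p₀)
        = ∑ g : G, ∑ g₀ : G, (if u g = g₀ then c (g₀ • p₀) else 0) := by
          refine Finset.sum_congr rfl fun g _ => ?_
          rw [Finset.sum_ite_eq Finset.univ (u g) (fun g₀ => c (g₀ • p₀))]
          rw [if_pos (Finset.mem_univ _), hus]
      _ = ∑ g₀ : G, ∑ g : G, (if u g = g₀ then c (g₀ • p₀) else 0) := Finset.sum_comm
      _ = ∑ g₀ : G, (Finset.univ.filter fun g : G => u g = g₀).card • c (g₀ • p₀) := by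
          refine Finset.sum_congr rfl fun g₀ _ => ?_
          rw [← Finset.sum_filter, Finset.sum_const]
      _ = ∑ g₀ : G, (if u g₀ = g₀ then n else 0) • c (g₀ • p₀) := by
          refine Finset.sum_congr rfl fun g₀ _ => ?_
          rw [key]
      _ = n • ∑ g₀ : G, (if u g₀ = g₀ then c (g₀ • p₀) else 0) := by
          rw [Finset.smul_sum]
          refine Finset.sum_congr rfl fun g₀ _ => ?_
          split_ifs <;> simp
  rw [h0] at step
  have hn0 : n ≠ 0 := by
    have h1 : (1 : G) ∈ Finset.univ.filter (fun h : G => h • p₀ = p₀) := by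
      simp [one_smul]
    exact (Finset.card_pos.mpr ⟨1, h1⟩).ne'
  have hstep := step.symm
  rw [nsmul_eq_mul] at hstep
  rcases mul_eq_zero.mp hstep with hx | hx
  · exact absurd (by exact_mod_cast hx) hn0
  · exact hx

end Orbit

section Hrow

variable {G S T : Type*} [Group G] [Fintype G] [MulAction G S] [MulAction G T]

open Classical in
noncomputable def hrow (Φ : (S →₀ ℤ) →+ (T →₀ ℤ)) (R : S × T → S × T) (γ : S × T → G)
    (g : G) (s : S) : T →₀ ℤ :=
  ∑ t' ∈ (Φ (Finsupp.single (g • s) 1)).support,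
    if R (s, g⁻¹ • t') = (s, g⁻¹ • t') ∧ γ (g • s, t') = g
    then Finsupp.single (g⁻¹ • t') (Φ (Finsupp.single (g • s) 1) t') else 0

open Classical in
lemma hrow_apply (Φ : (S →₀ ℤ) →+ (T →₀ ℤ)) (R : S × T → S × T) (γ : S × T → G)
    (g : G) (s : S) (t : T) :
    hrow Φ R γ g s t =
      if R (s, t) = (s, t) ∧ γ (g • s, g • t) = g
      then Φ (Finsupp.single (g • s) 1) (g • t) else 0 := by
  rw [hrow, Finsupp.finset_sum_apply]
  have hterm : ∀ t' ∈ (Φ (Finsupp.single (g • s) 1)).support,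
      (if R (s, g⁻¹ • t') = (s, g⁻¹ • t') ∧ γ (g • s, t') = g
       then Finsupp.single (g⁻¹ • t') (Φ (Finsupp.single (g • s) 1) t') else 0) t
      = if t' = g • t then (if R (s, t) = (s, t) ∧ γ (g • s, g • t) = g
          then Φ (Finsupp.single (g • s) 1) (g • t) else 0) else 0 := by
    intro t' _
    by_cases h1 : t' = g • t
    · subst h1
      simp only [inv_smul_smul, if_pos rfl]
      split_ifs with h2
      · rw [Finsupp.single_eq_same]
      · simp
    · rw [if_neg h1]
      split_ifs with h2
      · refine Finsupp.single_eq_of_ne ?_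
        intro hc
        exact h1 (by rw [hc, smul_inv_smul])
      · simp
  rw [Finset.sum_congr rfl hterm, Finset.sum_ite_eq' _ (g • t) _]
  by_cases hmem : g • t ∈ (Φ (Finsupp.single (g • s) 1)).support
  · rw [if_pos hmem]
  · rw [if_neg hmem]
    rw [Finsupp.notMem_support_iff] at hmem
    rw [hmem, ite_self]

lemma decomp (Φ : (S →₀ ℤ) →+ (T →₀ ℤ))
    (hΦ : ∀ (s : S) (t : T), (∑ g : G, Φ (Finsupp.single (g • s) 1) (g • t)) = 0) :
    ∃ H : G → ((S →₀ ℤ) →+ (T →₀ ℤ)),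
      Φ = ∑ g : G, ((permHom g).comp ((H g).comp (permHom g⁻¹)) - H g) := by
  classical
  obtain ⟨R, γ, hRs, hRR, hγ⟩ := orbit_data (G := G) (X := S × T)
  set H : G → ((S →₀ ℤ) →+ (T →₀ ℤ)) :=
    fun g => Finsupp.liftAddHom (fun s => (zmultiplesHom _) (hrow Φ R γ g s)) with hH
  have hHe : ∀ (g : G) (s : S), H g (Finsupp.single s 1) = hrow Φ R γ g s := by
    intro g s
    rw [hH]
    simp [Finsupp.liftAddHom_apply_single]
  refine ⟨H, ?_⟩
  apply Finsupp.addHom_ext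
  intro s n
  have hsingle : (Finsupp.single s n : S →₀ ℤ) = n • Finsupp.single s 1 := by
    rw [Finsupp.smul_single, smul_eq_mul, mul_one]
  rw [hsingle, map_zsmul, map_zsmul]
  congr 1
  ext t
  rw [AddMonoidHom.finset_sum_apply, Finsupp.finset_sum_apply]
  have hterm : ∀ g : G, (((permHom g).comp ((H g).comp (permHom g⁻¹)) - H g)
        (Finsupp.single s 1)) t
      = (if γ (s, t) = g then Φ (Finsupp.single s 1) t else 0)
        - (if R (s, t) = (s, t) ∧ γ (g • s, g • t) = g
            then Φ (Finsupp.single (g • s) 1) (g • t) else 0) := by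
    intro g
    rw [AddMonoidHom.sub_apply, Finsupp.sub_apply]
    congr 1
    · rw [AddMonoidHom.comp_apply, AddMonoidHom.comp_apply, permHom_single, hHe,
        permHom_apply, hrow_apply]
      simp only [smul_inv_smul]
      by_cases hg : γ (s, t) = g
      · have hRfix : (g⁻¹ • s, g⁻¹ • t) = R (s, t) := by
          have h := hγ (s, t)
          rw [hg] at h
          have h2 : g⁻¹ • (s, t) = R (s, t) := inv_smul_eq_iff.mpr h.symm
          rw [← h2]
          rfl
        rw [if_pos ⟨by rw [hRfix, hRR], hg⟩, if_pos hg]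
      · rw [if_neg hg, if_neg (fun hc => hg hc.2)]
    · rw [hHe, hrow_apply]
  rw [Finset.sum_congr rfl (fun g _ => hterm g), Finset.sum_sub_distrib]
  have h1 : ∑ g : G, (if γ (s, t) = g then Φ (Finsupp.single s 1) t else 0)
      = Φ (Finsupp.single s 1) t := by
    rw [Finset.sum_ite_eq Finset.univ (γ (s, t)) (fun _ => Φ (Finsupp.single s 1) t)]
    rw [if_pos (Finset.mem_univ _)]
  have h2 : ∑ g : G, (if R (s, t) = (s, t) ∧ γ (g • s, g • t) = g
      then Φ (Finsupp.single (g • s) 1) (g • t) else 0) = 0 := by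
    by_cases hrep : R (s, t) = (s, t)
    · have hcount := count_aux R γ hRs hγ (fun p => Φ (Finsupp.single p.1 1) p.2) (s, t) hrep
        (by exact hΦ s t)
      calc ∑ g : G, (if R (s, t) = (s, t) ∧ γ (g • s, g • t) = g
              then Φ (Finsupp.single (g • s) 1) (g • t) else 0)
          = ∑ g : G, (if γ (g • (s, t)) = g
              then (fun p : S × T => Φ (Finsupp.single p.1 1) p.2) (g • (s, t)) else 0) := by
            refine Finset.sum_congr rfl fun g _ => ?_
            simp only [hrep, true_and]
            rfl
        _ = 0 := hcount
    · refine Finset.sum_eq_zero fun g _ => if_neg (fun hc => hrep hc.1)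
  rw [h1, h2, sub_zero]

end Hrow

section Lift

variable {G S T : Type*} [Group G] [Fintype G] [MulAction G S] [MulAction G T]

lemma lift_exists (ε : T → S) (hε : ∀ (g : G) (t : T), ε (g • t) = g • ε t)
    (f : ↥(aug S).ker →+ (T →₀ ℤ)) (hf : (∑ g : G, homAct0 g f) = 0) (t₀ : T) :
    ∃ Φ : (S →₀ ℤ) →+ (T →₀ ℤ),
      (∀ (x : S →₀ ℤ) (hx : x ∈ (aug S).ker), Φ x = f ⟨x, hx⟩) ∧
      (∀ (s : S) (t : T), (∑ g : G, Φ (Finsupp.single (g • s) 1) (g • t)) = 0) := by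
  classical
  set sJ : S := ε t₀ with hsJ
  set π₀ : (S →₀ ℤ) →+ (S →₀ ℤ) :=
    AddMonoidHom.id _ - ((zmultiplesHom _) (Finsupp.single sJ 1)).comp (aug S) with hπ₀
  have hπ₀app : ∀ x, π₀ x = x - aug S x • Finsupp.single sJ 1 := by
    intro x
    simp [hπ₀, AddMonoidHom.sub_apply]
  have hπ₀ker : ∀ x, π₀ x ∈ (aug S).ker := by
    intro x
    rw [AddMonoidHom.mem_ker, hπ₀app, map_sub, map_zsmul, aug_single, smul_eq_mul, mul_one,
      sub_self]
  set F : (S →₀ ℤ) →+ (T →₀ ℤ) := f.comp (π₀.codRestrict (aug S).ker hπ₀ker) with hF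
  have hFapp : ∀ x, F x = f ⟨x - aug S x • Finsupp.single sJ 1, by rw [← hπ₀app]; exact hπ₀ker x⟩ := by
    intro x
    rw [hF]
    show f _ = f _
    congr 1
    all_goals exact Subtype.ext (hπ₀app x)
  have hFker : ∀ (x : S →₀ ℤ) (hx : x ∈ (aug S).ker), F x = f ⟨x, hx⟩ := by
    intro x hx
    rw [hFapp]
    congr 1
    refine Subtype.ext ?_
    show x - aug S x • Finsupp.single sJ 1 = x
    rw [AddMonoidHom.mem_ker.mp hx, zero_smul, sub_zero]
  -- the norm of F vanishes on the kernel
  have hW0 : ∀ (x : S →₀ ℤ) (hx : x ∈ (aug S).ker),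
      (∑ g : G, permHom g (F (permHom g⁻¹ x))) = 0 := by
    intro x hx
    have hterm : ∀ g : G, permHom g (F (permHom g⁻¹ x)) = homAct0 g f ⟨x, hx⟩ := by
      intro g
      have hker : permHom g⁻¹ x ∈ (aug S).ker := by
        rw [AddMonoidHom.mem_ker, aug_permHom]
        exact hx
      rw [hFker _ hker]
      rfl
    rw [Finset.sum_congr rfl (fun g _ => hterm g), ← AddMonoidHom.finset_sum_apply, hf]
    rfl
  set y₀ : T →₀ ℤ := ∑ g : G, permHom g (F (permHom g⁻¹ (Finsupp.single sJ 1))) with hy₀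
  have hWaug : ∀ x : S →₀ ℤ,
      (∑ g : G, permHom g (F (permHom g⁻¹ x))) = aug S x • y₀ := by
    intro x
    have hx : x = (x - aug S x • Finsupp.single sJ 1) + aug S x • Finsupp.single sJ 1 := by
      rw [sub_add_cancel]
    calc (∑ g : G, permHom g (F (permHom g⁻¹ x)))
        = ∑ g : G, (permHom g (F (permHom g⁻¹ (x - aug S x • Finsupp.single sJ 1)))
            + aug S x • permHom g (F (permHom g⁻¹ (Finsupp.single sJ 1)))) := by
          refine Finset.sum_congr rfl fun g _ => ?_
          conv_lhs => rw [hx]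
          rw [map_add, map_add, map_add, map_zsmul, map_zsmul, map_zsmul]
      _ = (∑ g : G, permHom g (F (permHom g⁻¹ (x - aug S x • Finsupp.single sJ 1))))
            + aug S x • ∑ g : G, permHom g (F (permHom g⁻¹ (Finsupp.single sJ 1))) := by
          rw [Finset.sum_add_distrib, Finset.smul_sum]
      _ = aug S x • y₀ := by
          rw [hW0 _ (by rw [← hπ₀app]; exact hπ₀ker x), zero_add, hy₀]
  have hy₀inv : ∀ g : G, permHom g y₀ = y₀ := by
    intro g
    calc permHom g y₀
        = ∑ h : G, permHom g (permHom h (F (permHom h⁻¹ (Finsupp.single sJ 1)))) := by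
          rw [hy₀, map_sum]
      _ = ∑ h : G, permHom (g * h) (F (permHom h⁻¹ (Finsupp.single sJ 1))) := by
          refine Finset.sum_congr rfl fun h _ => ?_
          rw [permHom_mul]
      _ = ∑ k : G, permHom k (F (permHom k⁻¹ (Finsupp.single (g • sJ) 1))) := by
          apply Fintype.sum_equiv (Equiv.mulLeft g)
          intro h
          simp only [Equiv.coe_mulLeft]
          rw [← permHom_single g sJ (1 : ℤ), permHom_mul, mul_inv_rev, inv_mul_cancel_right]
      _ = aug S (Finsupp.single (g • sJ) 1) • y₀ := hWaug _
      _ = y₀ := by rw [aug_single, one_smul]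
  have hy₀app : ∀ (g : G) (t : T), y₀ (g • t) = y₀ t := by
    intro g t
    have h := permHom_apply g⁻¹ y₀ t
    rw [hy₀inv, inv_inv] at h
    exact h.symm
  set z : T →₀ ℤ := ∑ t ∈ y₀.support, Finsupp.single t (F (Finsupp.single (ε t) 1) t) with hzdef
  have hzapp : ∀ t' : T, z t' = if t' ∈ y₀.support then F (Finsupp.single (ε t') 1) t' else 0 := by
    intro t'
    rw [hzdef, Finsupp.finset_sum_apply]
    rw [Finset.sum_congr rfl (fun u _ => Finsupp.single_apply (a := u) (a' := t')
      (b := F (Finsupp.single (ε u) 1) u))]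
    exact Finset.sum_ite_eq' y₀.support t' _
  have hz : (∑ g : G, permHom g z) = y₀ := by
    ext t₁
    rw [Finsupp.finset_sum_apply]
    by_cases h1 : t₁ ∈ y₀.support
    · calc ∑ g : G, permHom g z t₁
          = ∑ g : G, F (Finsupp.single (ε (g⁻¹ • t₁)) 1) (g⁻¹ • t₁) := by
            refine Finset.sum_congr rfl fun g _ => ?_
            rw [permHom_apply, hzapp, if_pos]
            rw [Finsupp.mem_support_iff] at h1 ⊢
            rw [show y₀ (g⁻¹ • t₁) = y₀ t₁ from hy₀app g⁻¹ t₁]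
            exact h1
        _ = ∑ g : G, permHom g (F (permHom g⁻¹ (Finsupp.single (ε t₁) 1))) t₁ := by
            refine Finset.sum_congr rfl fun g _ => ?_
            rw [permHom_apply, permHom_single, hε]
        _ = y₀ t₁ := by
            rw [← Finsupp.finset_sum_apply, hWaug, aug_single, one_smul]
    · rw [Finsupp.notMem_support_iff] at h1
      rw [h1]
      refine Finset.sum_eq_zero fun g _ => ?_
      rw [permHom_apply, hzapp, if_neg]
      rw [Finsupp.notMem_support_iff]
      rw [show y₀ (g⁻¹ • t₁) = y₀ t₁ from hy₀app g⁻¹ t₁]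
      exact h1
  refine ⟨F - ((zmultiplesHom _) z).comp (aug S), ?_, ?_⟩
  · intro x hx
    rw [AddMonoidHom.sub_apply]
    rw [show (((zmultiplesHom (T →₀ ℤ)) z).comp (aug S)) x = aug S x • z from rfl]
    rw [AddMonoidHom.mem_ker.mp hx, zero_smul, sub_zero]
    exact hFker x hx
  · intro s t
    have hNΦ : ∀ x : S →₀ ℤ,
        (∑ g : G, permHom g ((F - ((zmultiplesHom _) z).comp (aug S)) (permHom g⁻¹ x))) = 0 := by
      intro x
      calc (∑ g : G, permHom g ((F - ((zmultiplesHom _) z).comp (aug S)) (permHom g⁻¹ x)))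
          = ∑ g : G, (permHom g (F (permHom g⁻¹ x)) - aug S x • permHom g z) := by
            refine Finset.sum_congr rfl fun g _ => ?_
            rw [AddMonoidHom.sub_apply]
            rw [show (((zmultiplesHom (T →₀ ℤ)) z).comp (aug S)) (permHom g⁻¹ x)
              = aug S (permHom g⁻¹ x) • z from rfl]
            rw [aug_permHom, map_sub, map_zsmul]
        _ = aug S x • y₀ - aug S x • y₀ := by
            rw [Finset.sum_sub_distrib, hWaug, ← Finset.smul_sum, hz]
        _ = 0 := sub_self _
    calc (∑ g : G, ((F - ((zmultiplesHom _) z).comp (aug S)) (Finsupp.single (g • s) 1)) (g • t))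
        = ∑ g : G, (permHom g⁻¹ ((F - ((zmultiplesHom _) z).comp (aug S))
            (permHom g (Finsupp.single s 1)))) t := by
          refine Finset.sum_congr rfl fun g _ => ?_
          rw [permHom_single, permHom_apply, inv_inv]
      _ = ∑ g : G, (permHom g ((F - ((zmultiplesHom _) z).comp (aug S))
            (permHom g⁻¹ (Finsupp.single s 1)))) t := by
          apply Fintype.sum_equiv (Equiv.inv G)
          intro g
          simp only [Equiv.inv_apply, inv_inv]
      _ = 0 := by
          rw [← Finsupp.finset_sum_apply, hNΦ]
          rfl

end Lift

/-- Lemma "H-10S(2)": if there is a `G`-map `ε : T → S`, then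
`Ĥ⁻¹(G, Hom(ℤ[S]₀, ℤ[T])) = 0`. -/
theorem stmt3 {G S T : Type*} [Group G] [Fintype G] [MulAction G S] [MulAction G T]
    (ε : T → S) (hε : ∀ (g : G) (t : T), ε (g • t) = g • ε t)
    (f : ↥(aug S).ker →+ (T →₀ ℤ))
    (hf : (∑ g : G, homAct0 g f) = 0) :
    f ∈ AddSubgroup.closure
      {x : ↥(aug S).ker →+ (T →₀ ℤ) |
        ∃ (g : G) (h : ↥(aug S).ker →+ (T →₀ ℤ)), x = homAct0 g h - h} := by
  classical
  by_cases hT : IsEmpty T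
  · have hf0 : f = 0 := by
      ext x t
      exact hT.elim t
    rw [hf0]
    exact (AddSubgroup.closure _).zero_mem
  rw [not_isEmpty_iff] at hT
  obtain ⟨t₀⟩ := hT
  obtain ⟨Φ, hΦker, hΦnorm⟩ := lift_exists ε hε f hf t₀
  obtain ⟨H, hH⟩ := decomp Φ hΦnorm
  have hfeq : f = ∑ g : G, (homAct0 g ((H g).comp (aug S).ker.subtype)
      - (H g).comp (aug S).ker.subtype) := by
    refine AddMonoidHom.ext fun x => ?_
    have h1 : f x = Φ (x : S →₀ ℤ) := (hΦker _ x.2).symm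
    rw [h1, hH, AddMonoidHom.finset_sum_apply, AddMonoidHom.finset_sum_apply]
    apply Finset.sum_congr rfl
    intro g _
    rfl
  rw [hfeq]
  apply AddSubgroup.sum_mem
  intro g _
  exact AddSubgroup.subset_closure ⟨g, (H g).comp (aug S).ker.subtype, rfl⟩
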